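/- arXiv:2406.04189 — 2 statements merged into one kernel-verified Lean document; each statement's English description precedes it below -/
import Mathlib

section
/- There exists a countably infinite simple directed acyclic graph that admits no majority 2-coloring. Precisely: there exists a directed graph given by an irreflexive edge relation E on a countable vertex set V whose transitive closure is irreflexive (i.e., the graph has no directed cycle), such that for every coloring φ : V → Bool there is some vertex v for which the cardinality of the set of out-neighbors u of v with φ(u) = φ(v) strictly exceeds the cardinality of the set of out-neighbors u of v with φ(u) ≠ φ(v). -/
namespace MajCounter

/-- Vertices of the counterexample digraph: a global sink `s` with auxiliary
vertices `uc1, uc2, cc` (providing a "constant" colour), an ω-tower of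
"levels", level `k` consisting of a chain `bb k i` (i ∈ ℕ), an
infinite-out-degree reader `R k` of that chain, base-gadget vertices
`ub1 k, ub2 k`, and per-position gadget vertices `a1 k i, a2 k i`. -/
inductive GV : Type where
  | s : GV
  | uc1 : GV
  | uc2 : GV
  | cc : GV
  | R (k : ℕ) : GV
  | bb (k i : ℕ) : GV
  | ub1 (k : ℕ) : GV
  | ub2 (k : ℕ) : GV
  | a1 (k i : ℕ) : GV
  | a2 (k i : ℕ) : GV

open GV

/-- The edge relation. -/
def GE : GV → GV → Prop
  | .s, _ => False
  | .uc1, u => u = .s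
  | .uc2, u => u = .s
  | .cc, u => u = .uc1 ∨ u = .uc2 ∨ u = .s
  | .R k, u => ∃ i, u = .bb k i
  | .bb k 0, u => u = .ub1 k ∨ u = .ub2 k ∨ u = .R (k+1)
  | .bb k (i+1), u => u = .a1 k i ∨ u = .a2 k i ∨ u = .cc
  | .ub1 k, u => u = .R (k+1)
  | .ub2 k, u => u = .R (k+1)
  | .a1 k i, u => u = .bb k i
  | .a2 k i, u => u = .bb (k+1) i

lemma GE_irrefl : Irreflexive GE := by
  intro v h
  cases v with
  | s => exact h
  | uc1 => simp [GE] at h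
  | uc2 => simp [GE] at h
  | cc => simp [GE] at h
  | R k => simp [GE] at h
  | bb k i => cases i <;> simp [GE] at h
  | ub1 k => simp [GE] at h
  | ub2 k => simp [GE] at h
  | a1 k i => simp [GE] at h
  | a2 k i => simp [GE] at h

/-! ### Acyclicity via a lexicographic rank -/

def f1 : GV → ℚ
  | .s => -1
  | .uc1 => -1
  | .uc2 => -1
  | .cc => -1
  | .R k => (1/2 : ℚ)^k
  | .bb k _ => (1/2 : ℚ)^k
  | .ub1 k => (1/2 : ℚ)^k
  | .ub2 k => (1/2 : ℚ)^k
  | .a1 k _ => (1/2 : ℚ)^k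
  | .a2 k _ => (1/2 : ℚ)^k

def f2 : GV → ℚ
  | .s => 0
  | .uc1 => 1
  | .uc2 => 1
  | .cc => 2
  | .R _ => 1
  | .bb _ i => -(1/((i:ℚ)+1))
  | .ub1 _ => -5
  | .ub2 _ => -5
  | .a1 _ i => (-(1/((i:ℚ)+1)) + -(1/((i:ℚ)+2)))/2
  | .a2 _ _ => -5

def LexLt (u v : GV) : Prop := f1 u < f1 v ∨ (f1 u = f1 v ∧ f2 u < f2 v)

lemma lexLt_trans {a b c : GV} (h1 : LexLt a b) (h2 : LexLt b c) : LexLt a c := by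
  rcases h1 with h1 | ⟨h1, h1'⟩ <;> rcases h2 with h2 | ⟨h2, h2'⟩
  · exact Or.inl (h1.trans h2)
  · exact Or.inl (h2 ▸ h1)
  · exact Or.inl (h1 ▸ h2)
  · exact Or.inr ⟨h1.trans h2, h1'.trans h2'⟩

lemma pow_half_pos (k : ℕ) : (0:ℚ) < (1/2:ℚ)^k := by positivity

lemma pow_half_succ_lt (k : ℕ) : (1/2:ℚ)^(k+1) < (1/2:ℚ)^k := by
  rw [pow_succ]
  nlinarith [pow_half_pos k]

lemma inv_succ_pos (i : ℕ) : (0:ℚ) < 1/((i:ℚ)+1) := by positivity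

lemma inv_succ_le_one (i : ℕ) : 1/((i:ℚ)+1) ≤ 1 := by
  rw [div_le_one (by positivity)]
  have : (0:ℚ) ≤ (i:ℚ) := Nat.cast_nonneg i
  linarith

lemma inv_mono (i : ℕ) : 1/((i:ℚ)+2) < 1/((i:ℚ)+1) := by
  have h1 : (0:ℚ) < (i:ℚ)+1 := by positivity
  rw [div_lt_div_iff₀ (by positivity) h1]
  linarith

lemma GE_lexLt {v u : GV} (h : GE v u) : LexLt u v := by
  have hneg : ∀ k : ℕ, (-1:ℚ) < (1/2:ℚ)^k := fun k => lt_trans (by norm_num) (pow_half_pos k)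
  cases v with
  | s => exact absurd h (by simp [GE])
  | uc1 =>
      simp only [GE] at h; subst h
      exact Or.inr ⟨rfl, by norm_num [f2]⟩
  | uc2 =>
      simp only [GE] at h; subst h
      exact Or.inr ⟨rfl, by norm_num [f2]⟩
  | cc =>
      simp only [GE] at h
      rcases h with rfl | rfl | rfl <;> exact Or.inr ⟨rfl, by norm_num [f2]⟩
  | R k =>
      simp only [GE] at h
      obtain ⟨i, rfl⟩ := h
      refine Or.inr ⟨rfl, ?_⟩
      simp only [f2]
      have := inv_succ_pos i
      linarith
  | bb k i =>
      cases i with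
      | zero =>
          simp only [GE] at h
          rcases h with rfl | rfl | rfl
          · refine Or.inr ⟨rfl, ?_⟩
            simp only [f2]
            have := inv_succ_le_one 0
            norm_num at this ⊢
          · refine Or.inr ⟨rfl, ?_⟩
            simp only [f2]
            have := inv_succ_le_one 0
            norm_num at this ⊢
          · exact Or.inl (by simpa [f1] using pow_half_succ_lt k)
      | succ i =>
          simp only [GE] at h
          rcases h with rfl | rfl | rfl
          · refine Or.inr ⟨rfl, ?_⟩
            simp only [f2]
            have h1 := inv_mono i
            rw [Nat.cast_succ, show ((i:ℚ)+1+1) = (i:ℚ)+2 by ring]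
            linarith [inv_succ_pos i]
          · refine Or.inr ⟨rfl, ?_⟩
            simp only [f2]
            have h2 := inv_succ_le_one (i+1)
            push_cast at h2 ⊢
            linarith
          · exact Or.inl (by simpa [f1] using hneg k)
  | ub1 k => simp only [GE] at h; subst h; exact Or.inl (by simpa [f1] using pow_half_succ_lt k)
  | ub2 k => simp only [GE] at h; subst h; exact Or.inl (by simpa [f1] using pow_half_succ_lt k)
  | a1 k i =>
      simp only [GE] at h; subst h
      refine Or.inr ⟨rfl, ?_⟩
      simp only [f2]
      have h1 := inv_mono i
      linarith [inv_succ_pos i]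
  | a2 k i => simp only [GE] at h; subst h; exact Or.inl (by simpa [f1] using pow_half_succ_lt k)

lemma transGE_irrefl : Irreflexive (Relation.TransGen GE) := by
  have key : ∀ v u : GV, Relation.TransGen GE v u → LexLt u v := by
    intro v u h
    induction h with
    | single h => exact GE_lexLt h
    | tail _ h ih => exact lexLt_trans (GE_lexLt h) ih
  intro v h
  rcases key v v h with h1 | ⟨_, h2⟩
  · exact lt_irrefl _ h1
  · exact lt_irrefl _ h2

/-! ### Countability and infinitude -/

def enc : GV → ℕ × ℕ × ℕ
  | .s => (0,0,0)
  | .uc1 => (1,0,0)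
  | .uc2 => (2,0,0)
  | .cc => (3,0,0)
  | .R k => (4,k,0)
  | .bb k i => (5,k,i)
  | .ub1 k => (6,k,0)
  | .ub2 k => (7,k,0)
  | .a1 k i => (8,k,i)
  | .a2 k i => (9,k,i)

lemma enc_inj : Function.Injective enc := by
  intro a b h
  cases a <;> cases b <;> simp [enc, Prod.ext_iff] at h <;> simp_all

instance : Countable GV := enc_inj.countable

instance : Infinite GV := Infinite.of_injective (fun n => GV.bb 0 n) (by
  intro a b h; simpa using h)

/-! ### Failure lemmas -/

lemma fail1 (φ : GV → Bool) (v t : GV) (hE : ∀ u, GE v u ↔ u = t) (ht : φ t = φ v) :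
    Cardinal.mk {u : GV | GE v u ∧ φ u ≠ φ v} < Cardinal.mk {u : GV | GE v u ∧ φ u = φ v} := by
  have hdiff : {u : GV | GE v u ∧ φ u ≠ φ v} = ∅ := by
    ext u
    simp only [Set.mem_setOf_eq, Set.mem_empty_iff_false, iff_false, not_and]
    rw [hE]
    rintro rfl
    simp [ht]
  have hsame : {u : GV | GE v u ∧ φ u = φ v} = {t} := by
    ext u
    simp only [Set.mem_setOf_eq, Set.mem_singleton_iff]
    rw [hE]
    constructor
    · rintro ⟨rfl, _⟩; rfl
    · rintro rfl; exact ⟨rfl, ht⟩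
  rw [hdiff, hsame]
  simp only [Cardinal.mk_emptyCollection, Cardinal.mk_singleton]
  norm_num

lemma fail3 (φ : GV → Bool) (v x y z : GV) (hxy : x ≠ y)
    (hE : ∀ u, GE v u ↔ (u = x ∨ u = y ∨ u = z))
    (hx : φ x = φ v) (hy : φ y = φ v) :
    Cardinal.mk {u : GV | GE v u ∧ φ u ≠ φ v} < Cardinal.mk {u : GV | GE v u ∧ φ u = φ v} := by
  have hdiff : {u : GV | GE v u ∧ φ u ≠ φ v} ⊆ {z} := by
    intro u hu
    obtain ⟨hEu, hne⟩ := hu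
    rcases (hE u).1 hEu with rfl | rfl | rfl
    · exact absurd hx hne
    · exact absurd hy hne
    · rfl
  have hsame : ({x, y} : Set GV) ⊆ {u : GV | GE v u ∧ φ u = φ v} := by
    rintro u (rfl | rfl)
    · exact ⟨(hE u).2 (Or.inl rfl), hx⟩
    · exact ⟨(hE u).2 (Or.inr (Or.inl rfl)), hy⟩
  have h1 : Cardinal.mk {u : GV | GE v u ∧ φ u ≠ φ v} ≤ 1 := by
    calc Cardinal.mk {u : GV | GE v u ∧ φ u ≠ φ v}
        ≤ Cardinal.mk ({z} : Set GV) := Cardinal.mk_le_mk_of_subset hdiff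
      _ = 1 := Cardinal.mk_singleton z
  have h2 : (2 : Cardinal) ≤ Cardinal.mk {u : GV | GE v u ∧ φ u = φ v} := by
    have hpair : Cardinal.mk ({x, y} : Set GV) = 2 := by
      rw [Cardinal.mk_insert (by simpa using hxy), Cardinal.mk_singleton]
      norm_num
    calc (2 : Cardinal) = Cardinal.mk ({x, y} : Set GV) := hpair.symm
      _ ≤ _ := Cardinal.mk_le_mk_of_subset hsame
  calc Cardinal.mk {u : GV | GE v u ∧ φ u ≠ φ v} ≤ 1 := h1
    _ < 2 := by norm_num
    _ ≤ _ := h2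

lemma failR (φ : GV → Bool) (k n : ℕ) (h : ∀ i, n ≤ i → φ (GV.bb k i) = φ (GV.R k)) :
    Cardinal.mk {u : GV | GE (GV.R k) u ∧ φ u ≠ φ (GV.R k)} <
      Cardinal.mk {u : GV | GE (GV.R k) u ∧ φ u = φ (GV.R k)} := by
  have hbbinj : Function.Injective (GV.bb k) := by intro a b hab; simpa using hab
  have hdiff : {u : GV | GE (GV.R k) u ∧ φ u ≠ φ (GV.R k)} ⊆ (GV.bb k) '' (Set.Iio n) := by
    rintro u ⟨hEu, hne⟩
    obtain ⟨i, rfl⟩ := hEu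
    refine ⟨i, ?_, rfl⟩
    by_contra hi
    exact hne (h i (le_of_not_gt hi))
  have hsame : (GV.bb k) '' (Set.Ici n) ⊆ {u : GV | GE (GV.R k) u ∧ φ u = φ (GV.R k)} := by
    rintro u ⟨i, hi, rfl⟩
    exact ⟨⟨i, rfl⟩, h i hi⟩
  have hfin : Cardinal.mk {u : GV | GE (GV.R k) u ∧ φ u ≠ φ (GV.R k)} < Cardinal.aleph0 := by
    have : ({u : GV | GE (GV.R k) u ∧ φ u ≠ φ (GV.R k)}).Finite :=
      Set.Finite.subset ((Set.finite_Iio n).image _) hdiff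
    exact this.lt_aleph0
  have hinf : Cardinal.aleph0 ≤ Cardinal.mk {u : GV | GE (GV.R k) u ∧ φ u = φ (GV.R k)} := by
    have : ({u : GV | GE (GV.R k) u ∧ φ u = φ (GV.R k)}).Infinite :=
      Set.Infinite.mono hsame ((Set.Ici_infinite n).image (hbbinj.injOn))
    rw [Cardinal.aleph0_le_mk_iff]
    exact this.to_subtype
  exact lt_of_lt_of_le hfin hinf

/-! ### Bool helper lemmas -/

lemma bool_ne_ne : ∀ a b c : Bool, a ≠ c → b ≠ c → a = b := by decide

lemma boolAND : ∀ β x y v A B C : Bool, A ≠ x → B ≠ y → C = β →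
    (A = v → B = v → False) → (A = v → C = v → False) → (B = v → C = v → False) →
    (v = β ↔ (x = β ∧ y = β)) := by decide

/-! ### Main combinatorial lemma: no majority 2-coloring -/

lemma no_two_coloring (φ : GV → Bool) :
    ∃ v : GV, Cardinal.mk {u : GV | GE v u ∧ φ u ≠ φ v} <
      Cardinal.mk {u : GV | GE v u ∧ φ u = φ v} := by
  by_contra hex
  rw [not_exists] at hex
  have hno : ∀ v, ¬ (Cardinal.mk {u : GV | GE v u ∧ φ u ≠ φ v} <
      Cardinal.mk {u : GV | GE v u ∧ φ u = φ v}) := hex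
  -- deg-1 vertices take the colour opposite to their target
  have anti : ∀ v t : GV, (∀ u, GE v u ↔ u = t) → φ v ≠ φ t := by
    intro v t hE h
    exact hno v (fail1 φ v t hE h.symm)
  have huc1 : φ uc1 ≠ φ s := anti uc1 s (fun u => Iff.rfl)
  have huc2 : φ uc2 ≠ φ s := anti uc2 s (fun u => Iff.rfl)
  have ha1 : ∀ k i, φ (a1 k i) ≠ φ (bb k i) := fun k i => anti _ _ (fun u => Iff.rfl)
  have ha2 : ∀ k i, φ (a2 k i) ≠ φ (bb (k+1) i) := fun k i => anti _ _ (fun u => Iff.rfl)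
  have hub1 : ∀ k, φ (ub1 k) ≠ φ (R (k+1)) := fun k => anti _ _ (fun u => Iff.rfl)
  have hub2 : ∀ k, φ (ub2 k) ≠ φ (R (k+1)) := fun k => anti _ _ (fun u => Iff.rfl)
  -- the constant vertex has the colour of the sink
  have hcc : φ cc = φ s := by
    by_contra hne
    have hEcc : ∀ u, GE cc u ↔ (u = uc1 ∨ u = uc2 ∨ u = s) := fun u => Iff.rfl
    exact hno cc (fail3 φ cc uc1 uc2 s (by simp) hEcc
      (bool_ne_ne _ _ _ huc1 hne) (bool_ne_ne _ _ _ huc2 hne))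
  -- base of each chain is tied to the next reader
  have hbase : ∀ k, φ (bb k 0) = φ (R (k+1)) := by
    intro k
    by_contra hne
    have hE0 : ∀ u, GE (bb k 0) u ↔ (u = ub1 k ∨ u = ub2 k ∨ u = R (k+1)) := fun u => Iff.rfl
    exact hno (bb k 0) (fail3 φ (bb k 0) (ub1 k) (ub2 k) (R (k+1)) (by simp) hE0
      (bool_ne_ne _ _ _ (hub1 k) hne) (bool_ne_ne _ _ _ (hub2 k) hne))
  -- chain recursion: b^k_{i+1} is the "AND" (relative to φ s) of b^k_i and b^{k+1}_i
  have hAND : ∀ k i, (φ (bb k (i+1)) = φ s) ↔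
      (φ (bb k i) = φ s ∧ φ (bb (k+1) i) = φ s) := by
    intro k i
    have hEq : ∀ u, GE (bb k (i+1)) u ↔ (u = a1 k i ∨ u = a2 k i ∨ u = cc) := fun u => Iff.rfl
    have F12 : φ (a1 k i) = φ (bb k (i+1)) → φ (a2 k i) = φ (bb k (i+1)) → False := by
      intro p q; exact hno _ (fail3 φ _ _ _ cc (by simp) hEq p q)
    have F13 : φ (a1 k i) = φ (bb k (i+1)) → φ cc = φ (bb k (i+1)) → False := by
      intro p q
      refine hno _ (fail3 φ (bb k (i+1)) (a1 k i) cc (a2 k i) (by simp) ?_ p q)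
      intro u; rw [hEq u]; tauto
    have F23 : φ (a2 k i) = φ (bb k (i+1)) → φ cc = φ (bb k (i+1)) → False := by
      intro p q
      refine hno _ (fail3 φ (bb k (i+1)) (a2 k i) cc (a1 k i) (by simp) ?_ p q)
      intro u; rw [hEq u]; tauto
    exact boolAND (φ s) (φ (bb k i)) (φ (bb (k+1) i)) (φ (bb k (i+1)))
      (φ (a1 k i)) (φ (a2 k i)) (φ cc) (ha1 k i) (ha2 k i) hcc F12 F13 F23
  -- reader of an all-`φ s` chain must take the opposite colour
  have hRfull : ∀ k, (∀ i, φ (bb k i) = φ s) → φ (R k) ≠ φ s := by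
    intro k hk h
    exact hno (R k) (failR φ k 0 (fun i _ => (hk i).trans h.symm))
  -- reader of an eventually-not-`φ s` chain must take the colour `φ s`
  have hmono : ∀ k i, φ (bb k (i+1)) = φ s → φ (bb k i) = φ s :=
    fun k i h => ((hAND k i).1 h).1
  have hdown : ∀ k i j, j ≤ i → φ (bb k i) = φ s → φ (bb k j) = φ s := by
    intro k i
    induction i with
    | zero =>
        intro j hj h
        have hj0 : j = 0 := Nat.le_zero.1 hj
        rwa [hj0]
    | succ n ih =>
        intro j hj h
        rcases Nat.lt_or_ge j (n+1) with hlt | hge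
        · exact ih j (Nat.lt_succ_iff.1 hlt) (hmono k n h)
        · have : j = n+1 := le_antisymm hj hge
          rw [this]; exact h
  have hRnot : ∀ k i0, φ (bb k i0) ≠ φ s → φ (R k) = φ s := by
    intro k i0 hi0
    by_contra hne
    refine hno (R k) (failR φ k i0 (fun i hi => ?_))
    have hbi : φ (bb k i) ≠ φ s := fun h => hi0 (hdown k i i0 hi h)
    exact bool_ne_ne _ _ _ hbi hne
  -- endgame
  by_cases hfull : ∃ k0, ∀ i, φ (bb k0 i) = φ s
  · obtain ⟨k0, hk0⟩ := hfull
    have hfull1 : ∀ i, φ (bb (k0+1) i) = φ s := fun i => ((hAND k0 i).1 (hk0 (i+1))).2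
    have hr : φ (R (k0+1)) ≠ φ s := hRfull _ hfull1
    exact hr ((hbase k0).symm.trans (hk0 0))
  · push_neg at hfull
    have hR : ∀ k, φ (R k) = φ s := by
      intro k
      obtain ⟨i0, hi0⟩ := hfull k
      exact hRnot k i0 hi0
    have hP0 : ∀ k, φ (bb k 0) = φ s := fun k => (hbase k).trans (hR (k+1))
    have hall : ∀ i k, φ (bb k i) = φ s := by
      intro i
      induction i with
      | zero => exact hP0
      | succ n ih => exact fun k => (hAND k n).2 ⟨ih k, ih (k+1)⟩
    obtain ⟨i, hi⟩ := hfull 0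
    exact hi (hall i 0)

end MajCounter

/-- There exists a countably infinite simple directed acyclic graph (an irreflexive
edge relation whose transitive closure is irreflexive, i.e. no directed cycle)
that admits no majority 2-coloring: for every coloring `φ : V → Bool` there is a
vertex `v` whose monochromatic out-neighbors strictly outnumber (as cardinals)
its bi-chromatic out-neighbors. -/
theorem exists_countable_dag_not_majority_two_colorable :
    ∃ (V : Type) (E : V → V → Prop),
      Countable V ∧ Infinite V ∧
      Irreflexive E ∧
      Irreflexive (Relation.TransGen E) ∧
      ∀ φ : V → Bool, ∃ v : V,
        Cardinal.mk {u : V | E v u ∧ φ u ≠ φ v} <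
          Cardinal.mk {u : V | E v u ∧ φ u = φ v} := by
  refine ⟨MajCounter.GV, MajCounter.GE, inferInstance, inferInstance,
    MajCounter.GE_irrefl, MajCounter.transGE_irrefl, MajCounter.no_two_coloring⟩
end

section
/- Every finite simple directed acyclic graph admits a majority 2-coloring. Precisely: if E is an irreflexive relation on a finite vertex set V with no directed cycle (equivalently, the transitive closure of E is irreflexive), then there exists a coloring φ : V → Bool such that for every vertex v, the number of out-neighbors u of v with φ(u) = φ(v) is at most the number of out-neighbors u of v with φ(u) ≠ φ(v). -/
/-- Every finite simple directed acyclic graph admits a majority 2-coloring: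
if `E` is an irreflexive relation on a finite vertex set whose transitive
closure is irreflexive (no directed cycle), then there is a coloring
`φ : V → Bool` such that every vertex has at most as many monochromatic
out-neighbors as bi-chromatic ones. -/
theorem finite_dag_majority_two_colorable
    (V : Type) [Finite V] (E : V → V → Prop)
    (hirr : Irreflexive E)
    (hacyc : Irreflexive (Relation.TransGen E)) :
    ∃ φ : V → Bool, ∀ v : V,
      Nat.card {u : V | E v u ∧ φ u = φ v} ≤
        Nat.card {u : V | E v u ∧ φ u ≠ φ v} := by
  have hwf : WellFounded (fun u v : V => E v u) := by
    have hirr' : IsIrrefl V (Relation.TransGen (fun u v : V => E v u)) := by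
      constructor
      intro a h
      exact hacyc a (Relation.TransGen.swap a a h)
    have htr : IsTrans V (Relation.TransGen (fun u v : V => E v u)) :=
      ⟨fun _ _ _ h h' => h.trans h'⟩
    have := Finite.wellFounded_of_trans_of_irrefl
      (Relation.TransGen (fun u v : V => E v u))
    exact @Subrelation.wf V (Relation.TransGen (fun u v : V => E v u))
      (fun u v : V => E v u) (fun h => Relation.TransGen.single h) this
  set f : ∀ v : V, (∀ u : V, E v u → Bool) → Bool := fun v rec =>
    if Nat.card {u : V | ∃ h : E v u, rec u h = false} ≤
       Nat.card {u : V | ∃ h : E v u, rec u h = true} then false else true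
    with hf
  set φ : V → Bool := hwf.fix f with hφdef
  have hφ : ∀ v, φ v = f v (fun u _ => φ u) := fun v => hwf.fix_eq f v
  refine ⟨φ, fun v => ?_⟩
  have hset : ∀ b : Bool, {u : V | ∃ _ : E v u, φ u = b} = {u : V | E v u ∧ φ u = b} := by
    intro b; ext u; simp [exists_prop]
  have key := hφ v
  rw [hf] at key
  simp only [hset] at key
  by_cases hle : Nat.card {u : V | E v u ∧ φ u = false} ≤
      Nat.card {u : V | E v u ∧ φ u = true}
  · rw [if_pos hle] at key
    have h1 : {u : V | E v u ∧ φ u = φ v} = {u : V | E v u ∧ φ u = false} := by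
      ext u; simp [key]
    have h2 : {u : V | E v u ∧ φ u ≠ φ v} = {u : V | E v u ∧ φ u = true} := by
      ext u; simp [key]
    rw [h1, h2]; exact hle
  · rw [if_neg hle] at key
    have h1 : {u : V | E v u ∧ φ u = φ v} = {u : V | E v u ∧ φ u = true} := by
      ext u; simp [key]
    have h2 : {u : V | E v u ∧ φ u ≠ φ v} = {u : V | E v u ∧ φ u = false} := by
      ext u; simp [key]
    rw [h1, h2]; omega
end
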